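/- Let ℓ, m, k, k' be positive integers with ℓ = k·k', let ζ(y) ∈ F₂[y], and in R = F₂[x, y]/(xˡ − 1, yᵐ − 1) let c = x^k + ζ(y). Define χ(y) = ζ(y)^{k'} + 1 ∈ F₂[y] and let χ̄(y) = gcd(χ(y), yᵐ + 1) and g(y)·χ̄(y) = yᵐ + 1 in F₂[y]. Suppose w is a positive integer such that every nonzero element of the ideal (g(y)) in F₂[y]/(yᵐ − 1) has Hamming weight at least w. Then every nonzero element f ∈ ann_R(c) has Hamming weight at least k'·w. Moreover, every nonzero element of ann_R(c) of minimal Hamming weight has weight at most k'·m. -/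

import Mathlib

/-- The group algebra `F₂[Z/ℓ × Z/m] = F₂[x, y]/(xˡ − 1, yᵐ − 1)`.  Elements have a
unique representative `Σ a_{ij} x^i y^j` (a finitely supported function on the group). -/
abbrev GA (l m : ℕ) := MonoidAlgebra (ZMod 2) (Multiplicative (ZMod l × ZMod m))

/-- The cyclic group algebra `F₂[Z/m] = F₂[y]/(yᵐ − 1)`. -/
abbrev GAc (m : ℕ) := MonoidAlgebra (ZMod 2) (Multiplicative (ZMod m))

/-- The element `x ∈ F₂[x, y]/(xˡ − 1, yᵐ − 1)`. -/
noncomputable def xg (l m : ℕ) : GA l m :=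
  MonoidAlgebra.single (Multiplicative.ofAdd ((1 : ZMod l), (0 : ZMod m))) 1

/-- The element `y ∈ F₂[x, y]/(xˡ − 1, yᵐ − 1)`. -/
noncomputable def yg (l m : ℕ) : GA l m :=
  MonoidAlgebra.single (Multiplicative.ofAdd ((0 : ZMod l), (1 : ZMod m))) 1

/-- The element `y ∈ F₂[y]/(yᵐ − 1)`. -/
noncomputable def yc (m : ℕ) : GAc m :=
  MonoidAlgebra.single (Multiplicative.ofAdd (1 : ZMod m)) 1

/-- Hamming weight on `F₂[x, y]/(xˡ − 1, yᵐ − 1)`: the number of nonzero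
coefficients of the unique representative. -/
noncomputable def wtGA {l m : ℕ} (f : GA l m) : ℕ := f.coeff.support.card

/-- Hamming weight on `F₂[y]/(yᵐ − 1)`. -/
noncomputable def wtC {m : ℕ} (a : GAc m) : ℕ := a.coeff.support.card

/-- The semiperiodic element `c = x^k + ζ(y)`. -/
noncomputable def cSemi (l m k : ℕ) (z : Polynomial (ZMod 2)) : GA l m :=
  xg l m ^ k + Polynomial.aeval (yg l m) z

namespace St16
variable {l m : ℕ}

def emb (i : ZMod l) : Multiplicative (ZMod m) → Multiplicative (ZMod l × ZMod m) :=
  fun j => Multiplicative.ofAdd (i, j.toAdd)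

lemma emb_inj (i : ZMod l) : Function.Injective (emb (m := m) i) := by
  intro a b h
  simpa [emb, Prod.ext_iff] using h

noncomputable def comp (i : ZMod l) (f : GA l m) : GAc m :=
  MonoidAlgebra.ofCoeff (Finsupp.comapDomain (emb i) f.coeff (emb_inj i).injOn)

@[simp] lemma comp_apply (i : ZMod l) (f : GA l m) (j : Multiplicative (ZMod m)) :
    (comp i f).coeff j = f.coeff (Multiplicative.ofAdd (i, j.toAdd)) := rfl

lemma comp_add (i : ZMod l) (f g : GA l m) : comp i (f + g) = comp i f + comp i g := by
  ext j
  show (f + g).coeff _ = f.coeff _ + g.coeff _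
  exact Finsupp.add_apply f.coeff g.coeff _

lemma comp_single (i a : ZMod l) (b : ZMod m) (c : ZMod 2) :
    comp i (MonoidAlgebra.single (Multiplicative.ofAdd (a, b)) c)
      = if i = a then MonoidAlgebra.single (Multiplicative.ofAdd b) c else 0 := by
  ext j
  obtain ⟨j', rfl⟩ : ∃ j', Multiplicative.ofAdd j' = j := ⟨j.toAdd, rfl⟩
  rcases eq_or_ne i a with rfl | h
  · rw [if_pos rfl]
    simp only [comp_apply, toAdd_ofAdd, MonoidAlgebra.coeff_single, Finsupp.single_apply]
    by_cases hb : b = j'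
    · subst hb; simp
    · rw [if_neg, if_neg]
      · intro hh; exact hb (Multiplicative.ofAdd.injective hh)
      · intro hh; exact hb (congrArg Prod.snd (Multiplicative.ofAdd.injective hh))
  · simp only [comp_apply, toAdd_ofAdd, MonoidAlgebra.coeff_single, Finsupp.single_apply, if_neg h, MonoidAlgebra.coeff_zero, Finsupp.coe_zero,
      Pi.zero_apply]
    have hne : Multiplicative.ofAdd (a, b) ≠ Multiplicative.ofAdd (i, j') := by
      intro hh
      exact h (congrArg Prod.fst (Multiplicative.ofAdd.injective hh)).symm
    rw [if_neg hne]

lemma eq_zero_of_comp (f : GA l m) (h : ∀ i, comp i f = 0) : f = 0 := by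
  ext s
  have := congrFun (congrArg (fun (a : GAc m) => ⇑a.coeff) (h s.toAdd.1)) (Multiplicative.ofAdd s.toAdd.2)
  simpa using this

end St16

namespace St16
variable {l m : ℕ}

lemma xg_pow (a : ℕ) : (xg l m) ^ a
    = MonoidAlgebra.single (Multiplicative.ofAdd ((a : ZMod l), (0 : ZMod m))) 1 := by
  rw [xg, MonoidAlgebra.single_pow, one_pow]
  rw [← ofAdd_nsmul]
  congr 1
  simp [Prod.ext_iff]

lemma comp_mul_xg_pow (i : ZMod l) (f : GA l m) (a : ℕ) :
    comp i (f * (xg l m) ^ a) = comp (i - (a : ZMod l)) f := by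
  ext j
  rw [comp_apply, xg_pow, MonoidAlgebra.coeff_mul_single_apply, mul_one, comp_apply]
  congr 2
  simp [← ofAdd_neg, ← ofAdd_add, Prod.ext_iff, sub_eq_add_neg]

/-- embedding `F₂[y]/(yᵐ−1) → F₂[x,y]/(xˡ−1,yᵐ−1)` -/
noncomputable def iota (l m : ℕ) : GAc m →ₐ[ZMod 2] GA l m :=
  MonoidAlgebra.mapDomainAlgHom (ZMod 2) (ZMod 2)
    (AddMonoidHom.toMultiplicative (AddMonoidHom.prod (0 : ZMod m →+ ZMod l) (AddMonoidHom.id (ZMod m))))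

lemma iota_single (b : ZMod m) (c : ZMod 2) :
    iota l m (MonoidAlgebra.single (Multiplicative.ofAdd b) c)
      = MonoidAlgebra.single (Multiplicative.ofAdd ((0 : ZMod l), b)) c := by
  rw [iota, MonoidAlgebra.mapDomainAlgHom_apply, MonoidAlgebra.mapDomain_single]
  rfl

lemma iota_yc : iota l m (yc m) = yg l m := by
  rw [yc, iota_single, yg]

end St16

namespace St16
variable {l m : ℕ}

@[simp] lemma comp_zero (i : ZMod l) : comp (m := m) i 0 = 0 := by
  ext j; simp [comp]

lemma comp_mul_iota (i : ZMod l) (f : GA l m) (b : GAc m) :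
    comp i (f * iota l m b) = comp i f * b := by
  induction b using MonoidAlgebra.induction_linear with
  | zero => simp
  | add b₁ b₂ h1 h2 => rw [map_add, mul_add, comp_add, h1, h2, mul_add]
  | single s c =>
    induction f using MonoidAlgebra.induction_linear with
    | zero => simp
    | add f₁ f₂ h1 h2 => rw [add_mul, comp_add, h1, h2, comp_add, add_mul]
    | single s' c' =>
      obtain ⟨⟨a₁, b₁⟩, rfl⟩ : ∃ p, Multiplicative.ofAdd p = s' := ⟨s'.toAdd, rfl⟩
      obtain ⟨b₂, rfl⟩ : ∃ p, Multiplicative.ofAdd p = s := ⟨s.toAdd, rfl⟩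
      rw [iota_single]
      show comp i (MonoidAlgebra.single _ c' * MonoidAlgebra.single _ c) = _
      rw [MonoidAlgebra.single_mul_single]
      have he : Multiplicative.ofAdd (a₁, b₁) * Multiplicative.ofAdd ((0 : ZMod l), b₂)
          = Multiplicative.ofAdd (a₁, b₁ + b₂) := by
        rw [← ofAdd_add]
        simp
      rw [he, comp_single, comp_single]
      rcases eq_or_ne i a₁ with rfl | h
      · rw [if_pos rfl, if_pos rfl, MonoidAlgebra.single_mul_single, ← ofAdd_add]
      · rw [if_neg h, if_neg h, zero_mul]

end St16

namespace St16
open Polynomial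
variable {l m : ℕ}

lemma yc_pow (n : ℕ) : (yc m) ^ n = MonoidAlgebra.single (Multiplicative.ofAdd ((n : ZMod m))) 1 := by
  rw [yc, MonoidAlgebra.single_pow, one_pow, ← ofAdd_nsmul]
  simp

lemma pi_monomial (c : ZMod 2) (n : ℕ) :
    Polynomial.aeval (yc m) (Polynomial.C c * Polynomial.X ^ n)
      = MonoidAlgebra.single (Multiplicative.ofAdd ((n : ZMod m))) c := by
  rw [map_mul, Polynomial.aeval_C, Polynomial.aeval_X_pow, yc_pow]
  have : (algebraMap (ZMod 2) (GAc m)) c = MonoidAlgebra.single 1 c := by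
    rw [MonoidAlgebra.coe_algebraMap]; rfl
  rw [this, MonoidAlgebra.single_mul_single, one_mul, mul_one]

lemma pi_surj (hm : 0 < m) (a : GAc m) : ∃ p : Polynomial (ZMod 2), Polynomial.aeval (yc m) p = a := by
  induction a using MonoidAlgebra.induction_linear with
  | zero => exact ⟨0, map_zero _⟩
  | add f g hf hg =>
    obtain ⟨p, hp⟩ := hf; obtain ⟨q, hq⟩ := hg
    exact ⟨p + q, by rw [map_add, hp, hq]⟩
  | single s c =>
    obtain ⟨b, rfl⟩ : ∃ p, Multiplicative.ofAdd p = s := ⟨s.toAdd, rfl⟩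
    refine ⟨Polynomial.C c * Polynomial.X ^ b.val, ?_⟩
    rw [pi_monomial]
    congr
    haveI : NeZero m := ⟨hm.ne'⟩
    exact ZMod.natCast_rightInverse b

lemma hpoly_ne (hm : 0 < m) : ((Polynomial.X : Polynomial (ZMod 2)) ^ m + 1) ≠ 0 := by
  intro h
  have := congrArg (fun p => Polynomial.coeff p 0) h
  simp [Polynomial.coeff_X_pow, hm.ne] at this

lemma pi_hpoly : Polynomial.aeval (yc m) ((Polynomial.X : Polynomial (ZMod 2)) ^ m + 1) = 0 := by
  rw [map_add, map_one, Polynomial.aeval_X_pow, yc_pow]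
  have : ((m : ZMod m)) = 0 := by simp
  rw [this]
  rw [MonoidAlgebra.one_def]
  have : (1 : ZMod 2) + 1 = 0 := by decide
  rw [ofAdd_zero, ← MonoidAlgebra.single_add, this]
  simp

end St16

namespace St16
open Polynomial
variable {l m : ℕ}

lemma pi_apply_of_natDegree_lt (r : Polynomial (ZMod 2)) (hr : r.natDegree < m) (n : ℕ)
    (hn : n < m) :
    (Polynomial.aeval (yc m) r).coeff (Multiplicative.ofAdd ((n : ZMod m))) = r.coeff n := by
  rw [Polynomial.aeval_eq_sum_range' hr]
  rw [MonoidAlgebra.coeff_sum, Finsupp.finset_sum_apply]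
  have : ∀ i ∈ Finset.range m,
      (r.coeff i • (yc m) ^ i).coeff (Multiplicative.ofAdd ((n : ZMod m)))
        = if i = n then r.coeff n else 0 := by
    intro i hi
    rw [yc_pow, MonoidAlgebra.coeff_smul_apply, MonoidAlgebra.coeff_single, Finsupp.single_apply]
    rcases eq_or_ne i n with rfl | h
    · rw [if_pos rfl, if_pos rfl, smul_eq_mul, mul_one]
    · rw [if_neg h, if_neg, smul_zero]
      intro hc
      have := (ZMod.natCast_eq_natCast_iff' i n m).mp (Multiplicative.ofAdd.injective hc)
      rw [Nat.mod_eq_of_lt (Finset.mem_range.mp hi), Nat.mod_eq_of_lt hn] at this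
      exact h this
  rw [Finset.sum_congr rfl this, Finset.sum_ite_eq' (Finset.range m) n fun _ => r.coeff n,
    if_pos (Finset.mem_range.mpr hn)]

lemma pi_ker (hm : 0 < m) (p : Polynomial (ZMod 2)) :
    Polynomial.aeval (yc m) p = 0 ↔ ((Polynomial.X : Polynomial (ZMod 2)) ^ m + 1) ∣ p := by
  constructor
  · intro hp
    have hmonic : ((Polynomial.X : Polynomial (ZMod 2)) ^ m + 1).Monic := by
      have : ((1 : Polynomial (ZMod 2))) = Polynomial.C 1 := by simp
      rw [this]
      exact Polynomial.monic_X_pow_add_C 1 hm.ne'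
    have hdeg : ((Polynomial.X : Polynomial (ZMod 2)) ^ m + 1).natDegree = m := by
      have : ((1 : Polynomial (ZMod 2))) = Polynomial.C 1 := by simp
      rw [this]
      exact Polynomial.natDegree_X_pow_add_C
    set h : Polynomial (ZMod 2) := Polynomial.X ^ m + 1 with hh
    have key : p %ₘ h = 0 := by
      have hlt : (p %ₘ h).natDegree < m := by
        rcases eq_or_ne (p %ₘ h) 0 with h0 | h0
        · rw [h0]; simpa using hm
        · have := Polynomial.natDegree_modByMonic_lt p hmonic (fun hc => by
            rw [hc] at hdeg
            simp only [Polynomial.natDegree_one] at hdeg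
            exact absurd hdeg.symm hm.ne')
          omega
      have hpi : Polynomial.aeval (yc m) (p %ₘ h) = 0 := by
        have := Polynomial.modByMonic_add_div p h
        have h2 : Polynomial.aeval (yc m) (p %ₘ h + h * (p /ₘ h)) = 0 := by rw [this]; exact hp
        rw [map_add, map_mul, pi_hpoly, zero_mul, add_zero] at h2
        exact h2
      ext n
      rcases lt_or_ge n m with h1 | h1
      · rw [← pi_apply_of_natDegree_lt _ hlt n h1, hpi]
        simp
      · rw [Polynomial.coeff_eq_zero_of_natDegree_lt (hlt.trans_le h1)]
        simp
    refine ⟨p /ₘ h, ?_⟩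
    conv_lhs => rw [← Polynomial.modByMonic_add_div p h]
    rw [key, zero_add]
  · rintro ⟨q, rfl⟩
    rw [map_mul, pi_hpoly, zero_mul]

end St16

namespace St16
open Polynomial
variable {l m : ℕ}

lemma key_dvd (chi g h α : Polynomial (ZMod 2)) (hh : h ≠ 0)
    (hg : g * EuclideanDomain.gcd chi h = h) : h ∣ chi * α ↔ g ∣ α := by
  set d := EuclideanDomain.gcd chi h with hd'
  have hd : d ≠ 0 := fun h0 => hh (by rw [← hg, h0, mul_zero])
  constructor
  · intro hdvd
    have hb : d = chi * EuclideanDomain.gcdA chi h + h * EuclideanDomain.gcdB chi h :=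
      EuclideanDomain.gcd_eq_gcd_ab chi h
    have h1 : h ∣ α * d := by
      rw [hb, mul_add, show α * (chi * EuclideanDomain.gcdA chi h)
          = chi * α * EuclideanDomain.gcdA chi h by ring]
      exact dvd_add (hdvd.mul_right _) ⟨α * EuclideanDomain.gcdB chi h, by ring⟩
    obtain ⟨q, hq⟩ := h1
    refine ⟨q, mul_right_cancel₀ hd ?_⟩
    rw [hq, ← hg]; ring
  · rintro ⟨β, rfl⟩
    obtain ⟨e, he⟩ := EuclideanDomain.gcd_dvd_left chi h
    rw [← hd'] at he
    exact ⟨e * β, by rw [he, ← hg]; ring⟩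

lemma addself (a : GA l m) : a + a = 0 := by
  ext s
  rw [MonoidAlgebra.coeff_add, Finsupp.add_apply]
  exact CharTwo.add_self_eq_zero _

lemma eq_of_add_eq_zero {u v : GA l m} (h : u + v = 0) : u = v := by
  have := congrArg (· + v) h
  simpa [add_assoc, addself v] using this

lemma wt_eq_sum [NeZero l] (f : GA l m) :
    wtGA f = ∑ i : ZMod l, wtC (comp i f) := by
  classical
  rw [wtGA, Finset.card_eq_sum_card_fiberwise
    (f := fun s : Multiplicative (ZMod l × ZMod m) => s.toAdd.1)
    (t := (Finset.univ : Finset (ZMod l))) (fun x _ => Finset.mem_univ _)]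
  refine Finset.sum_congr rfl fun i _ => ?_
  rw [wtC, comp, Finsupp.comapDomain_support, Finset.card_preimage]
  congr 1
  refine Finset.filter_congr fun s hs => ?_
  constructor
  · intro h
    refine ⟨Multiplicative.ofAdd s.toAdd.2, ?_⟩
    show Multiplicative.ofAdd (i, (Multiplicative.ofAdd s.toAdd.2).toAdd) = s
    rw [toAdd_ofAdd, ← h]
    simp
  · rintro ⟨j, rfl⟩; rfl

lemma wtC_le (hm : 0 < m) (a : GAc m) : wtC a ≤ m := by
  haveI : NeZero m := ⟨hm.ne'⟩
  have := Finset.card_le_univ a.coeff.support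
  rw [Fintype.card_multiplicative, ZMod.card] at this
  exact this

lemma comp_one (i : ZMod l) : comp (m := m) i 1 = if i = 0 then 1 else 0 := by
  have : (1 : GA l m) = MonoidAlgebra.single (Multiplicative.ofAdd ((0 : ZMod l), (0 : ZMod m))) 1 := rfl
  rw [this, comp_single]
  rcases eq_or_ne i 0 with rfl | h
  · rw [if_pos rfl, if_pos rfl]; rfl
  · rw [if_neg h, if_neg h]

lemma comp_shift_iota (i : ZMod l) (a : ℕ) (b : GAc m) :
    comp i ((xg l m) ^ a * iota l m b) = if i = (a : ZMod l) then b else 0 := by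
  have h1 : (xg l m) ^ a * iota l m b = (1 * iota l m b) * (xg l m) ^ a := by ring
  rw [h1, comp_mul_xg_pow, comp_mul_iota, comp_one]
  rcases eq_or_ne i (a : ZMod l) with rfl | h
  · rw [if_pos (sub_self _), if_pos rfl, one_mul]
  · rw [if_neg (sub_ne_zero_of_ne h), if_neg h, zero_mul]

end St16

namespace St16
open Polynomial
variable {l m : ℕ}

lemma comp_sum (i : ZMod l) {ι : Type*} (s : Finset ι) (F : ι → GA l m) :
    comp i (∑ j ∈ s, F j) = ∑ j ∈ s, comp i (F j) := by
  classical
  induction s using Finset.induction_on with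
  | empty => simp
  | insert _ _ hj ih => rw [Finset.sum_insert hj, Finset.sum_insert hj, comp_add, ih]

lemma addselfC (a : GAc m) : a + a = 0 := by
  ext s
  rw [MonoidAlgebra.coeff_add, Finsupp.add_apply]
  exact CharTwo.add_self_eq_zero _

end St16

/-- For a semiperiodic `c = x^k + ζ(y)` (with `k·k' = ℓ`), with
`χ = ζ^{k'} + 1`, `χ̄ = gcd(χ, yᵐ + 1)` and `g·χ̄ = yᵐ + 1`: if every nonzero
element of the ideal `(g(y)) ⊆ F₂[y]/(yᵐ − 1)` has Hamming weight at least `w`,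
then every nonzero `f ∈ ann(c)` has Hamming weight at least `k'·w`, and every
nonzero element of `ann(c)` of minimal Hamming weight has weight at most `k'·m`. -/
theorem stmt16 (l m k k' : ℕ) (hl : 0 < l) (hm : 0 < m) (hk : 0 < k) (hk' : 0 < k')
    (hkk : k * k' = l) (zeta g : Polynomial (ZMod 2))
    (hg : g * EuclideanDomain.gcd (zeta ^ k' + 1)
        ((Polynomial.X : Polynomial (ZMod 2)) ^ m + 1) =
      (Polynomial.X : Polynomial (ZMod 2)) ^ m + 1)
    (w : ℕ) (hw : 0 < w)
    (hwt : ∀ a ∈ Ideal.span {Polynomial.aeval (yc m) g}, a ≠ 0 → w ≤ wtC a) :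
    (∀ f : GA l m, f * cSemi l m k zeta = 0 → f ≠ 0 → k' * w ≤ wtGA f) ∧
    (∀ f : GA l m, f * cSemi l m k zeta = 0 → f ≠ 0 →
      (∀ f' : GA l m, f' * cSemi l m k zeta = 0 → f' ≠ 0 → wtGA f ≤ wtGA f') →
      wtGA f ≤ k' * m) := by

  classical
  haveI : NeZero l := ⟨hl.ne'⟩
  haveI : NeZero m := ⟨hm.ne'⟩
  open St16 in
  -- c = xg^k + iota (π zeta)
  have hc : cSemi l m k zeta = xg l m ^ k + iota l m (Polynomial.aeval (yc m) zeta) := by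
    rw [cSemi, ← iota_yc, Polynomial.aeval_algHom_apply]
  -- the annihilator relations for a fixed annihilating f
  have K2 : ∀ f : GA l m, f * cSemi l m k zeta = 0 →
      ∀ i : ZMod l, comp (i - (k : ZMod l)) f = comp i f * Polynomial.aeval (yc m) zeta := by
    intro f hf i
    rw [hc, mul_add] at hf
    have := eq_of_add_eq_zero hf
    have h2 := congrArg (comp i) this
    rw [comp_mul_xg_pow, comp_mul_iota] at h2
    exact h2
  have K3 : ∀ f : GA l m, f * cSemi l m k zeta = 0 →
      ∀ (j : ℕ) (i : ZMod l),
        comp (i - ((j * k : ℕ) : ZMod l)) f = comp i f * (Polynomial.aeval (yc m) zeta) ^ j := by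
    intro f hf j
    induction j with
    | zero => intro i; simp
    | succ n ih =>
      intro i
      have harith : i - (((n+1) * k : ℕ) : ZMod l) = (i - (k : ZMod l)) - ((n * k : ℕ) : ZMod l) := by
        push_cast; ring
      rw [harith, ih, K2 f hf, pow_succ]
      ring
  -- each component is killed by chi
  have K3' : ∀ f : GA l m, f * cSemi l m k zeta = 0 →
      ∀ i : ZMod l, comp i f = comp i f * (Polynomial.aeval (yc m) zeta) ^ k' := by
    intro f hf i
    have := K3 f hf k' i
    rw [show ((k' * k : ℕ) : ZMod l) = 0 by rw [mul_comm, hkk]; exact ZMod.natCast_self l,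
      sub_zero] at this
    exact this
  have Kchi : ∀ f : GA l m, f * cSemi l m k zeta = 0 →
      ∀ i : ZMod l, comp i f * Polynomial.aeval (yc m) (zeta ^ k' + 1) = 0 := by
    intro f hf i
    rw [map_add, map_one, map_pow, mul_add, mul_one, ← K3' f hf i]
    exact addselfC _
  -- each component lies in the ideal (π g)
  have K4 : ∀ f : GA l m, f * cSemi l m k zeta = 0 →
      ∀ i : ZMod l, Polynomial.aeval (yc m) g ∣ comp i f := by
    intro f hf i
    obtain ⟨α, hα⟩ := pi_surj hm (comp i f)
    have h0 : Polynomial.aeval (yc m) (α * (zeta ^ k' + 1)) = 0 := by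
      rw [map_mul, hα]
      exact Kchi f hf i
    rw [pi_ker hm, mul_comm] at h0
    obtain ⟨β, hβ⟩ := (key_dvd (zeta ^ k' + 1) g _ α (hpoly_ne hm) hg).mp h0
    exact ⟨Polynomial.aeval (yc m) β, by rw [← hα, hβ, map_mul]⟩
  -- nonzero propagation
  have K5 : ∀ f : GA l m, f * cSemi l m k zeta = 0 → ∀ i₀ : ZMod l, comp i₀ f ≠ 0 →
      ∀ j : ℕ, comp (i₀ + ((j * k : ℕ) : ZMod l)) f ≠ 0 := by
    intro f hf i₀ h0 j
    induction j with
    | zero => simpa using h0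
    | succ n ih =>
      intro hz
      apply ih
      have := K2 f hf (i₀ + (((n+1) * k : ℕ) : ZMod l))
      rw [hz, zero_mul] at this
      rw [show i₀ + ((n * k : ℕ) : ZMod l)
          = i₀ + (((n+1) * k : ℕ) : ZMod l) - (k : ZMod l) by push_cast; ring]
      exact this
  -- Part 1
  have part1 : ∀ f : GA l m, f * cSemi l m k zeta = 0 → f ≠ 0 → k' * w ≤ wtGA f := by
    intro f hf hf0
    -- find a nonzero component
    have hex : ∃ i₀ : ZMod l, comp i₀ f ≠ 0 := by
      by_contra hno
      push_neg at hno
      exact hf0 (eq_zero_of_comp f hno)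
    obtain ⟨i₀, hi₀⟩ := hex
    set e : ℕ → ZMod l := fun j => i₀ + ((j * k : ℕ) : ZMod l) with he
    have hinj : Set.InjOn e (Finset.range k') := by
      intro j₁ h₁ j₂ h₂ heq
      simp only [Finset.coe_range, Set.mem_Iio] at h₁ h₂
      have : ((j₁ * k : ℕ) : ZMod l) = ((j₂ * k : ℕ) : ZMod l) := by
        have := heq
        simp only [he] at this
        exact add_left_cancel this
      have hv := congrArg ZMod.val this
      rw [ZMod.val_cast_of_lt, ZMod.val_cast_of_lt] at hv
      · exact Nat.eq_of_mul_eq_mul_right hk hv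
      · calc j₂ * k < k' * k := (Nat.mul_lt_mul_right hk).mpr h₂
          _ = l := by rw [mul_comm, hkk]
      · calc j₁ * k < k' * k := (Nat.mul_lt_mul_right hk).mpr h₁
          _ = l := by rw [mul_comm, hkk]
    set S : Finset (ZMod l) := (Finset.range k').image e with hS
    have hcard : S.card = k' := by
      rw [hS, Finset.card_image_of_injOn hinj, Finset.card_range]
    have hlow : ∀ i ∈ S, w ≤ wtC (comp i f) := by
      intro i hi
      rw [hS, Finset.mem_image] at hi
      obtain ⟨j, hj, rfl⟩ := hi
      refine hwt _ (Ideal.mem_span_singleton.mpr (K4 f hf _)) (K5 f hf i₀ hi₀ j)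
    calc k' * w = ∑ _i ∈ S, w := by rw [Finset.sum_const, hcard, smul_eq_mul]
      _ ≤ ∑ i ∈ S, wtC (comp i f) := Finset.sum_le_sum hlow
      _ ≤ ∑ i : ZMod l, wtC (comp i f) :=
          Finset.sum_le_sum_of_subset (Finset.subset_univ S)
      _ = wtGA f := (wt_eq_sum f).symm
  refine ⟨part1, ?_⟩
  intro f hf hf0 hmin
  have hcastinj : ∀ j₁ j₂, j₁ < k' → j₂ < k' →
      ((j₁ * k : ℕ) : ZMod l) = ((j₂ * k : ℕ) : ZMod l) → j₁ = j₂ := by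
    intro j₁ j₂ h₁ h₂ heq
    have hv := congrArg ZMod.val heq
    rw [ZMod.val_cast_of_lt, ZMod.val_cast_of_lt] at hv
    · exact Nat.eq_of_mul_eq_mul_right hk hv
    · calc j₂ * k < k' * k := (Nat.mul_lt_mul_right hk).mpr h₂
        _ = l := by rw [mul_comm, hkk]
    · calc j₁ * k < k' * k := (Nat.mul_lt_mul_right hk).mpr h₁
        _ = l := by rw [mul_comm, hkk]
  by_cases hπg : Polynomial.aeval (yc m) g = 0
  · refine absurd (eq_zero_of_comp f fun i => ?_) hf0
    obtain ⟨b, hb⟩ := K4 f hf i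
    rw [hb, hπg, zero_mul]
  · set Z : GA l m := iota l m (Polynomial.aeval (yc m) zeta) with hZ
    set Gg : GA l m := iota l m (Polynomial.aeval (yc m) g) with hGg
    set T : ℕ → GA l m := fun n => ∑ j ∈ Finset.range n, xg l m ^ (j*k) * Gg * Z ^ (n-1-j)
      with hT
    have hTstep : ∀ n, T (n+1) = T n * Z + xg l m ^ (n*k) * Gg := by
      intro n
      simp only [hT]
      rw [Finset.sum_range_succ, Finset.sum_mul]
      congr 1
      · refine Finset.sum_congr rfl fun j hj => ?_
        have hj' : j < n := Finset.mem_range.mp hj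
        have : n + 1 - 1 - j = (n - 1 - j) + 1 := by omega
        rw [this, pow_succ]
        ring
      · have : n + 1 - 1 - n = 0 := by omega
        rw [this, pow_zero, mul_one]
    have hQ : ∀ n, T (n+1) * cSemi l m k zeta = xg l m ^ ((n+1)*k) * Gg + Gg * Z ^ (n+1) := by
      intro n
      induction n with
      | zero =>
        have hT1 : T 1 = Gg := by simp [hT]
        rw [hT1, hc]
        ring
      | succ n ih =>
        have h2 : (2 : GA l m) = 0 := by
          have := addself (1 : GA l m); rwa [one_add_one_eq_two] at this
        rw [hTstep (n+1), hc, ← hZ] at *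
        linear_combination Z * ih + xg l m ^ ((n+1)*k) * Gg * Z * h2
    have hk'1 : k' - 1 + 1 = k' := Nat.succ_pred_eq_of_pos hk'
    have hxg1 : xg l m ^ (k'*k) = 1 := by
      rw [xg_pow,
        show ((k'*k : ℕ) : ZMod l) = 0 from by rw [mul_comm, hkk]; exact ZMod.natCast_self l]
      rfl
    have hQf : T k' * cSemi l m k zeta = Gg + Gg * Z ^ k' := by
      have := hQ (k' - 1)
      rw [hk'1] at this
      rw [this, hxg1, one_mul]
    have hann : T k' * cSemi l m k zeta = 0 := by
      rw [hQf]
      have hdvd : ((Polynomial.X : Polynomial (ZMod 2)) ^ m + 1) ∣ g * (zeta ^ k' + 1) := by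
        obtain ⟨e, he⟩ := EuclideanDomain.gcd_dvd_left (zeta ^ k' + 1)
          ((Polynomial.X : Polynomial (ZMod 2)) ^ m + 1)
        exact ⟨e, by rw [he, ← mul_assoc, hg]⟩
      have hz : Polynomial.aeval (yc m) (g * (zeta ^ k' + 1)) = 0 := (pi_ker hm _).mpr hdvd
      have : Gg + Gg * Z ^ k' = iota l m (Polynomial.aeval (yc m) (g * (zeta ^ k' + 1))) := by
        rw [map_mul, map_add, map_one, map_pow, map_mul, map_add, map_one, map_pow, hGg, hZ]
        ring
      rw [this, hz, map_zero]
    have hterm : ∀ n j, xg l m ^ (j*k) * Gg * Z ^ (n-1-j)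
        = xg l m ^ (j*k) * iota l m
            (Polynomial.aeval (yc m) g * Polynomial.aeval (yc m) zeta ^ (n-1-j)) := by
      intro n j
      rw [map_mul, map_pow, hGg, hZ, mul_assoc]
    have hcompT : ∀ (n : ℕ) (i : ZMod l), comp i (T n)
        = ∑ j ∈ Finset.range n, if i = ((j*k : ℕ) : ZMod l)
            then Polynomial.aeval (yc m) g * Polynomial.aeval (yc m) zeta ^ (n-1-j) else 0 := by
      intro n i
      simp only [hT]
      rw [Finset.sum_congr rfl fun j _ => hterm n j, comp_sum]
      exact Finset.sum_congr rfl fun j _ => comp_shift_iota i (j*k) _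
    have hne : T k' ≠ 0 := by
      intro h0
      apply hπg
      have hcz := congrArg (comp (((k'-1)*k : ℕ) : ZMod l)) h0
      rw [comp_zero, hcompT] at hcz
      rw [Finset.sum_eq_single (k'-1)] at hcz
      · rw [if_pos rfl, Nat.sub_self, pow_zero, mul_one] at hcz
        exact hcz
      · intro j hj hjne
        rw [if_neg]
        intro hc'
        exact hjne (hcastinj j (k'-1) (Finset.mem_range.mp hj) (by omega) hc'.symm)
      · intro habs
        exact absurd (Finset.mem_range.mpr (by omega)) habs
    have hwtf' : wtGA (T k') ≤ k' * m := by
      rw [wt_eq_sum]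
      set S₀ : Finset (ZMod l) := (Finset.range k').image (fun j => ((j*k : ℕ) : ZMod l))
        with hS₀
      have hvan : ∀ i ∈ Finset.univ, i ∉ S₀ → wtC (comp i (T k')) = 0 := by
        intro i _ hi
        rw [hcompT]
        rw [Finset.sum_eq_zero]
        · simp [wtC]
        · intro j hj
          rw [if_neg]
          intro hc'
          exact hi (Finset.mem_image.mpr ⟨j, hj, hc'.symm⟩)
      calc ∑ i : ZMod l, wtC (comp i (T k'))
          = ∑ i ∈ S₀, wtC (comp i (T k')) :=
            (Finset.sum_subset (Finset.subset_univ S₀) hvan).symm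
        _ ≤ ∑ _i ∈ S₀, m := Finset.sum_le_sum fun i _ => wtC_le hm _
        _ = S₀.card * m := by rw [Finset.sum_const, smul_eq_mul]
        _ ≤ k' * m := by
            have := Finset.card_image_le (s := Finset.range k')
              (f := fun j => ((j*k : ℕ) : ZMod l))
            rw [Finset.card_range] at this
            exact Nat.mul_le_mul_right m this
    exact (hmin (T k') hann hne).trans hwtf'
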